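/- Let ω be a nondegenerate alternating C^∞(M)-bilinear form on D(M) and H the unique vector field with i_H ω = -δ1. Then the map X ↦ i_Xω is an isomorphism of C^∞(M)-modules from 𝔛(M) onto D(M)*_H = {η ∈ D(M)* : η(H) = 0}. -/

import Mathlib

open LinearMap

set_option linter.unusedSectionVars false
set_option linter.unusedVariables false

section Prelim

variable (K A : Type*) [Field K] [CharZero K] [CommRing A] [Algebra K A]

/-- A differential operator of order at most 1 on `A`. -/
def IsDiff1 (φ : A →ₗ[K] A) : Prop :=
  ∀ a b : A, φ (a * b) = a * φ b + b * φ a - a * b * φ 1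

variable {K A}

/-- The commutator bracket of two endomorphisms. -/
def opBracket (φ ψ : A →ₗ[K] A) : A →ₗ[K] A := φ ∘ₗ ψ - ψ ∘ₗ φ

theorem isDiff1_mulLeft (f : A) : IsDiff1 K A (LinearMap.mulLeft K f) := by
  intro a b; simp only [LinearMap.mulLeft_apply, mul_one]; ring

theorem IsDiff1.opBracket {φ ψ : A →ₗ[K] A} (hφ : IsDiff1 K A φ) (hψ : IsDiff1 K A ψ) :
    IsDiff1 K A (_root_.opBracket φ ψ) := by
  intro a b
  simp only [_root_.opBracket, LinearMap.sub_apply, LinearMap.comp_apply]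
  rw [hψ a b, hφ a b]
  simp only [map_add, map_sub]
  rw [hφ a (ψ b), hφ b (ψ a), hφ (a * b) (ψ 1), hψ a (φ b), hψ b (φ a), hψ (a * b) (φ 1),
    hφ a b, hψ a b]
  ring

variable (K A) in
/-- The `A`-module `Diff_K(A)` of differential operators of order at most 1 on `A`. -/
def Diff1 : Submodule A (A →ₗ[K] A) where
  carrier := {φ | IsDiff1 K A φ}
  add_mem' := by
    intro φ ψ hφ hψ a b
    simp only [LinearMap.add_apply, hφ a b, hψ a b]; ring
  zero_mem' := by intro a b; simp
  smul_mem' := by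
    intro c φ hφ a b
    simp only [LinearMap.smul_apply, smul_eq_mul, hφ a b]; ring

/-- The commutator bracket on `Diff1`. -/
def Diff1.bk (φ ψ : Diff1 K A) : Diff1 K A :=
  ⟨opBracket φ.1 ψ.1, IsDiff1.opBracket φ.2 ψ.2⟩

variable (K) in
/-- The multiplication operator by `f`, as a differential operator of order `≤ 1`. -/
def Diff1.const (f : A) : Diff1 K A := ⟨LinearMap.mulLeft K f, isDiff1_mulLeft f⟩

/-- Evaluation at the unit: the linear form `δ1 : φ ↦ φ(1)` on `Diff1`. -/
def ev1 : Diff1 K A →ₗ[A] A where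
  toFun φ := φ.1 1
  map_add' φ ψ := rfl
  map_smul' c φ := rfl

end Prelim

section Mfd

open scoped Manifold

local notation "∞" => (⊤ : ℕ∞)

variable {EM : Type*} [NormedAddCommGroup EM] [NormedSpace ℝ EM]
  {HM : Type*} [TopologicalSpace HM] {I : ModelWithCorners ℝ EM HM}
  {M : Type*} [TopologicalSpace M] [ChartedSpace HM M] [IsManifold I ((⊤ : ℕ∞) : WithTop ℕ∞) M]

theorem stmt9 (ω : Diff1 ℝ C^∞⟮I, M; ℝ⟯ →ₗ[C^∞⟮I, M; ℝ⟯] Diff1 ℝ C^∞⟮I, M; ℝ⟯ →ₗ[C^∞⟮I, M; ℝ⟯] C^∞⟮I, M; ℝ⟯)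
    (halt : ∀ φ : Diff1 ℝ C^∞⟮I, M; ℝ⟯, ω φ φ = 0) (hbij : Function.Bijective ω)
    (Hv : Diff1 ℝ C^∞⟮I, M; ℝ⟯) (hH : ω Hv = -ev1) :
    (∀ X : Diff1 ℝ C^∞⟮I, M; ℝ⟯, X.1 1 = 0 → ω X Hv = 0) ∧
      (∀ X Y : Diff1 ℝ C^∞⟮I, M; ℝ⟯, X.1 1 = 0 → Y.1 1 = 0 → ω X = ω Y → X = Y) ∧
      ∀ η : Diff1 ℝ C^∞⟮I, M; ℝ⟯ →ₗ[C^∞⟮I, M; ℝ⟯] C^∞⟮I, M; ℝ⟯, η Hv = 0 → ∃ X : Diff1 ℝ C^∞⟮I, M; ℝ⟯, X.1 1 = 0 ∧ ω X = η := by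
  have skew : ∀ X Y, ω X Y = - ω Y X := by
    intro X Y
    have h := halt (X + Y)
    simp only [map_add, LinearMap.add_apply, halt X, halt Y, zero_add, add_zero] at h
    exact eq_neg_of_add_eq_zero_left (by rw [add_comm]; exact h)
  refine ⟨?_, ?_, ?_⟩
  · intro X hX
    rw [skew, hH]
    simp only [LinearMap.neg_apply, neg_neg]
    exact hX
  · intro X Y _ _ h
    exact hbij.injective h
  · intro η hη
    obtain ⟨X, hX⟩ := hbij.surjective η
    refine ⟨X, ?_, hX⟩
    have : ω X Hv = 0 := by rw [hX]; exact hη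
    rw [skew, hH] at this
    exact (by simpa using this : ev1 X = 0)
end Mfd
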